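/- Let S and A be finite nonempty sets, k ∈ ℕ, γ ∈ (0,1), and consider two branched processes i ∈ {1,2} as in the k-branched setup (post-branch pair (π_i^post, p_i^post) for the first k steps, pre-branch pair (π_i^pre, p_i^pre) afterwards) from a common initial state distribution, with per-step divergences bounded by ε_m^post, ε_π^post during the post-branch phase and ε_m^pre, ε_π^pre during the pre-branch phase. Define the discounted occupancy measures d_i(s,a) = (1−γ)·Σ_{t=0}^∞ γ^t·d_i^t(s,a). Then TV(d_1, d_2) ≤ k·(ε_m^post + 2·ε_π^post) + γ^{k+1}/(1−γ)·(ε_m^pre + ε_π^pre) + γ^k·ε_π^pre. -/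

import Mathlib

open scoped BigOperators

/-- Total variation distance between two probability mass functions on a finite type. -/
noncomputable def tv {X : Type*} [Fintype X] (q1 q2 : PMF X) : ℝ :=
  (1 / 2) * ∑ x, |(q1 x).toReal - (q2 x).toReal|

/-- Total variation distance between two real-valued distributions on a finite type. -/
noncomputable def tvFun {X : Type*} [Fintype X] (d1 d2 : X → ℝ) : ℝ :=
  (1 / 2) * ∑ x, |d1 x - d2 x|

/-- Time-`t` state-action marginal of a (possibly time-varying) policy/dynamics pair,
started from initial state distribution `ρ0`:  `d⁰(s,a) = ρ0(s)·π₀(a|s)` and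
`d^{t+1}(s,a) = Σ_{s',a'} d^t(s',a')·p_t(s|s',a')·π_{t+1}(a|s)`. -/
noncomputable def marginal {S A : Type*} [Fintype S] [Fintype A]
    (ρ0 : PMF S) (πseq : ℕ → S → PMF A) (pseq : ℕ → S × A → PMF S) :
    ℕ → S × A → ℝ
  | 0 => fun sa => (ρ0 sa.1).toReal * ((πseq 0 sa.1) sa.2).toReal
  | t + 1 => fun sa =>
      ∑ s' : S, ∑ a' : A,
        marginal ρ0 πseq pseq t (s', a') * ((pseq t (s', a')) sa.1).toReal *
          ((πseq (t + 1) sa.1) sa.2).toReal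

/-- Discounted return `η = Σ_t γ^t Σ_{s,a} d^t(s,a)·r(s,a)`. -/
noncomputable def ret {S A : Type*} [Fintype S] [Fintype A]
    (γ : ℝ) (r : S × A → ℝ) (d : ℕ → S × A → ℝ) : ℝ :=
  ∑' t : ℕ, γ ^ t * ∑ sa : S × A, d t sa * r sa

lemma sum_pmf_toReal {X : Type*} [Fintype X] (q : PMF X) : ∑ x, (q x).toReal = 1 := by
  have h : ∑' x, q x = 1 := q.tsum_coe
  rw [tsum_fintype] at h
  rw [← ENNReal.toReal_sum (fun a _ => PMF.apply_ne_top q a), h, ENNReal.toReal_one]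

lemma tv_nonneg {X : Type*} [Fintype X] (q1 q2 : PMF X) : 0 ≤ tv q1 q2 := by
  unfold tv; positivity

lemma marginal_nonneg {S A : Type*} [Fintype S] [Fintype A]
    (ρ0 : PMF S) (πseq : ℕ → S → PMF A) (pseq : ℕ → S × A → PMF S) :
    ∀ t sa, 0 ≤ marginal ρ0 πseq pseq t sa := by
  intro t
  induction t with
  | zero => intro sa; unfold marginal; positivity
  | succ t ih =>
    intro sa
    unfold marginal
    refine Finset.sum_nonneg fun s' _ => Finset.sum_nonneg fun a' _ => ?_
    have := ih (s', a')
    positivity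

lemma marginal_sum_one {S A : Type*} [Fintype S] [Fintype A]
    (ρ0 : PMF S) (πseq : ℕ → S → PMF A) (pseq : ℕ → S × A → PMF S) :
    ∀ t, ∑ sa : S × A, marginal ρ0 πseq pseq t sa = 1 := by
  intro t
  induction t with
  | zero =>
    rw [Fintype.sum_prod_type]
    simp only [marginal]
    calc ∑ s, ∑ a, (ρ0 s).toReal * ((πseq 0 s) a).toReal
        = ∑ s, (ρ0 s).toReal * ∑ a, ((πseq 0 s) a).toReal := by
          simp [Finset.mul_sum]
      _ = 1 := by simp [sum_pmf_toReal]
  | succ t ih =>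
    rw [Fintype.sum_prod_type]
    simp only [marginal]
    calc ∑ s, ∑ a, ∑ s' : S, ∑ a' : A,
          marginal ρ0 πseq pseq t (s', a') * ((pseq t (s', a')) s).toReal *
            ((πseq (t + 1) s) a).toReal
        = ∑ s, ∑ s' : S, ∑ a' : A,
            marginal ρ0 πseq pseq t (s', a') * ((pseq t (s', a')) s).toReal := by
          refine Finset.sum_congr rfl fun s _ => ?_
          rw [Finset.sum_comm]
          refine Finset.sum_congr rfl fun s' _ => ?_
          rw [Finset.sum_comm]
          refine Finset.sum_congr rfl fun a' _ => ?_
          rw [← Finset.mul_sum]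
          simp [sum_pmf_toReal]
      _ = ∑ s' : S, ∑ a' : A, marginal ρ0 πseq pseq t (s', a') := by
          rw [Finset.sum_comm]
          refine Finset.sum_congr rfl fun s' _ => ?_
          rw [Finset.sum_comm]
          refine Finset.sum_congr rfl fun a' _ => ?_
          rw [← Finset.mul_sum]
          simp [sum_pmf_toReal]
      _ = 1 := by rw [← Fintype.sum_prod_type]; exact ih

lemma tv_comp {X Y : Type*} [Fintype X] [Fintype Y] (w1 w2 : X → ℝ) (q1 q2 : X → PMF Y)
    (hw1 : ∀ x, 0 ≤ w1 x) :
    (1/2) * ∑ x, ∑ y, |w1 x * ((q1 x) y).toReal - w2 x * ((q2 x) y).toReal| ≤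
      (∑ x, w1 x * tv (q1 x) (q2 x)) + (1/2) * ∑ x, |w1 x - w2 x| := by
  have key : ∀ x, ∑ y, |w1 x * ((q1 x) y).toReal - w2 x * ((q2 x) y).toReal| ≤
      w1 x * (2 * tv (q1 x) (q2 x)) + |w1 x - w2 x| := by
    intro x
    have h1 : ∀ y, |w1 x * ((q1 x) y).toReal - w2 x * ((q2 x) y).toReal| ≤
        w1 x * |((q1 x) y).toReal - ((q2 x) y).toReal| + |w1 x - w2 x| * ((q2 x) y).toReal := by
      intro y
      have he : w1 x * ((q1 x) y).toReal - w2 x * ((q2 x) y).toReal =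
          w1 x * (((q1 x) y).toReal - ((q2 x) y).toReal) +
            (w1 x - w2 x) * ((q2 x) y).toReal := by ring
      rw [he]
      refine (abs_add_le _ _).trans ?_
      rw [abs_mul, abs_mul, abs_of_nonneg (hw1 x), abs_of_nonneg ENNReal.toReal_nonneg]
    calc ∑ y, |w1 x * ((q1 x) y).toReal - w2 x * ((q2 x) y).toReal|
        ≤ ∑ y, (w1 x * |((q1 x) y).toReal - ((q2 x) y).toReal| +
            |w1 x - w2 x| * ((q2 x) y).toReal) := Finset.sum_le_sum fun y _ => h1 y
      _ = w1 x * ∑ y, |((q1 x) y).toReal - ((q2 x) y).toReal| +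
            |w1 x - w2 x| * ∑ y, ((q2 x) y).toReal := by
          rw [Finset.sum_add_distrib, Finset.mul_sum, Finset.mul_sum]
      _ = w1 x * (2 * tv (q1 x) (q2 x)) + |w1 x - w2 x| := by
          rw [sum_pmf_toReal, mul_one]
          unfold tv; ring
  calc (1/2) * ∑ x, ∑ y, |w1 x * ((q1 x) y).toReal - w2 x * ((q2 x) y).toReal|
      ≤ (1/2) * ∑ x, (w1 x * (2 * tv (q1 x) (q2 x)) + |w1 x - w2 x|) := by
        have := Finset.sum_le_sum (fun x (_ : x ∈ Finset.univ) => key x)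
        linarith
    _ = (∑ x, w1 x * tv (q1 x) (q2 x)) + (1/2) * ∑ x, |w1 x - w2 x| := by
        rw [Finset.sum_add_distrib]
        rw [show ∑ x, w1 x * (2 * tv (q1 x) (q2 x)) = 2 * ∑ x, w1 x * tv (q1 x) (q2 x) by
          rw [Finset.mul_sum]; exact Finset.sum_congr rfl fun x _ => by ring]
        ring

lemma pmf_weight_sum_le {X : Type*} [Fintype X] (w : X → ℝ) (f : X → ℝ) (ε : ℝ)
    (hw : ∀ x, 0 ≤ w x) (hws : ∑ x, w x = 1) (hf : ∀ x, f x ≤ ε) :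
    ∑ x, w x * f x ≤ ε := by
  calc ∑ x, w x * f x ≤ ∑ x, w x * ε :=
        Finset.sum_le_sum fun x _ => mul_le_mul_of_nonneg_left (hf x) (hw x)
    _ = ε := by rw [← Finset.sum_mul, hws, one_mul]

lemma tv_marginal_zero {S A : Type*} [Fintype S] [Fintype A]
    (ρ0 : PMF S) (π1s π2s : ℕ → S → PMF A) (p1s p2s : ℕ → S × A → PMF S) (επ : ℝ)
    (hπ : ∀ s, tv (π1s 0 s) (π2s 0 s) ≤ επ) :
    tvFun (marginal ρ0 π1s p1s 0) (marginal ρ0 π2s p2s 0) ≤ επ := by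
  unfold tvFun
  simp only [marginal]
  rw [Fintype.sum_prod_type]
  have h := tv_comp (fun s => (ρ0 s).toReal) (fun s => (ρ0 s).toReal)
    (π1s 0) (π2s 0) (fun s => ENNReal.toReal_nonneg)
  simp only [sub_self, abs_zero, Finset.sum_const_zero, mul_zero, add_zero] at h
  refine h.trans ?_
  exact pmf_weight_sum_le _ _ _ (fun s => ENNReal.toReal_nonneg) (sum_pmf_toReal ρ0)
    (fun s => hπ s)

lemma tv_marginal_step {S A : Type*} [Fintype S] [Fintype A]
    (ρ0 : PMF S) (π1s π2s : ℕ → S → PMF A) (p1s p2s : ℕ → S × A → PMF S) (t : ℕ) (επ : ℝ)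
    (hπ : ∀ s, tv (π1s (t+1) s) (π2s (t+1) s) ≤ επ) :
    tvFun (marginal ρ0 π1s p1s (t+1)) (marginal ρ0 π2s p2s (t+1)) ≤
      tvFun (marginal ρ0 π1s p1s t) (marginal ρ0 π2s p2s t) +
        (∑ sa : S × A, marginal ρ0 π1s p1s t sa * tv (p1s t sa) (p2s t sa)) + επ := by
  set d1 := marginal ρ0 π1s p1s t with hd1
  set d2 := marginal ρ0 π2s p2s t with hd2
  set ρ1 : S → ℝ := fun s => ∑ sa' : S × A, d1 sa' * ((p1s t sa') s).toReal with hρ1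
  set ρ2 : S → ℝ := fun s => ∑ sa' : S × A, d2 sa' * ((p2s t sa') s).toReal with hρ2
  have hm1 : ∀ sa : S × A, marginal ρ0 π1s p1s (t+1) sa =
      ρ1 sa.1 * ((π1s (t+1) sa.1) sa.2).toReal := by
    intro sa
    show (∑ s' : S, ∑ a' : A, d1 (s', a') * ((p1s t (s', a')) sa.1).toReal *
        ((π1s (t+1) sa.1) sa.2).toReal) = _
    rw [hρ1]
    simp only [Fintype.sum_prod_type]
    rw [Finset.sum_mul]
    exact Finset.sum_congr rfl fun s' _ => by rw [Finset.sum_mul]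
  have hm2 : ∀ sa : S × A, marginal ρ0 π2s p2s (t+1) sa =
      ρ2 sa.1 * ((π2s (t+1) sa.1) sa.2).toReal := by
    intro sa
    show (∑ s' : S, ∑ a' : A, d2 (s', a') * ((p2s t (s', a')) sa.1).toReal *
        ((π2s (t+1) sa.1) sa.2).toReal) = _
    rw [hρ2]
    simp only [Fintype.sum_prod_type]
    rw [Finset.sum_mul]
    exact Finset.sum_congr rfl fun s' _ => by rw [Finset.sum_mul]
  have hd1n : ∀ sa, 0 ≤ d1 sa := marginal_nonneg ρ0 π1s p1s t
  have hρ1n : ∀ s, 0 ≤ ρ1 s := fun s =>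
    Finset.sum_nonneg fun sa' _ => mul_nonneg (hd1n sa') ENNReal.toReal_nonneg
  have hρ1s : ∑ s, ρ1 s = 1 := by
    rw [hρ1]
    rw [Finset.sum_comm]
    calc ∑ sa' : S × A, ∑ s, d1 sa' * ((p1s t sa') s).toReal
        = ∑ sa' : S × A, d1 sa' * ∑ s, ((p1s t sa') s).toReal := by
          exact Finset.sum_congr rfl fun sa' _ => by rw [Finset.mul_sum]
      _ = ∑ sa' : S × A, d1 sa' := by
          exact Finset.sum_congr rfl fun sa' _ => by rw [sum_pmf_toReal, mul_one]
      _ = 1 := marginal_sum_one ρ0 π1s p1s t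
  calc tvFun (marginal ρ0 π1s p1s (t+1)) (marginal ρ0 π2s p2s (t+1))
      = (1/2) * ∑ s, ∑ a, |ρ1 s * ((π1s (t+1) s) a).toReal -
            ρ2 s * ((π2s (t+1) s) a).toReal| := by
        unfold tvFun
        rw [Fintype.sum_prod_type]
        congr 1
        exact Finset.sum_congr rfl fun s _ => Finset.sum_congr rfl fun a _ => by
          rw [hm1 (s, a), hm2 (s, a)]
    _ ≤ (∑ s, ρ1 s * tv (π1s (t+1) s) (π2s (t+1) s)) + (1/2) * ∑ s, |ρ1 s - ρ2 s| :=
        tv_comp ρ1 ρ2 (π1s (t+1)) (π2s (t+1)) hρ1n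
    _ ≤ επ + (1/2) * ∑ s, |ρ1 s - ρ2 s| := by
        have := pmf_weight_sum_le ρ1 (fun s => tv (π1s (t+1) s) (π2s (t+1) s)) επ hρ1n hρ1s hπ
        linarith
    _ ≤ επ + ((∑ sa : S × A, d1 sa * tv (p1s t sa) (p2s t sa)) + tvFun d1 d2) := by
        have hpt : (1/2) * ∑ s, |ρ1 s - ρ2 s| ≤
            (∑ sa : S × A, d1 sa * tv (p1s t sa) (p2s t sa)) + tvFun d1 d2 := by
          have h1 : ∀ s, |ρ1 s - ρ2 s| ≤
              ∑ sa' : S × A, |d1 sa' * ((p1s t sa') s).toReal -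
                d2 sa' * ((p2s t sa') s).toReal| := by
            intro s
            rw [hρ1, hρ2, ← Finset.sum_sub_distrib]
            exact Finset.abs_sum_le_sum_abs _ _
          have h2 : (1/2) * ∑ s, |ρ1 s - ρ2 s| ≤
              (1/2) * ∑ sa' : S × A, ∑ s, |d1 sa' * ((p1s t sa') s).toReal -
                d2 sa' * ((p2s t sa') s).toReal| := by
            rw [Finset.sum_comm]
            have := Finset.sum_le_sum (fun s (_ : s ∈ Finset.univ) => h1 s)
            linarith
          refine h2.trans ?_
          have := tv_comp d1 d2 (p1s t) (p2s t) hd1n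
          unfold tvFun
          linarith
        linarith
    _ = tvFun d1 d2 + (∑ sa : S × A, d1 sa * tv (p1s t sa) (p2s t sa)) + επ := by ring

lemma tvFun_nonneg {X : Type*} [Fintype X] (d1 d2 : X → ℝ) : 0 ≤ tvFun d1 d2 := by
  unfold tvFun; positivity

lemma marginal_le_one {S A : Type*} [Fintype S] [Fintype A]
    (ρ0 : PMF S) (πseq : ℕ → S → PMF A) (pseq : ℕ → S × A → PMF S) (t : ℕ) (sa : S × A) :
    marginal ρ0 πseq pseq t sa ≤ 1 := by
  have h := marginal_sum_one ρ0 πseq pseq t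
  calc marginal ρ0 πseq pseq t sa
      ≤ ∑ sa' : S × A, marginal ρ0 πseq pseq t sa' :=
        Finset.single_le_sum (fun sa' _ => marginal_nonneg ρ0 πseq pseq t sa')
          (Finset.mem_univ sa)
    _ = 1 := h

set_option maxHeartbeats 1200000 in
/-- Discounted occupancy measure bound for branched rollouts. -/
theorem branched_occupancy_tvd_bound
    {S A : Type*} [Fintype S] [Fintype A] [Nonempty S] [Nonempty A]
    (k : ℕ)
    (p1pre p2pre p1post p2post : S × A → PMF S)
    (π1pre π2pre π1post π2post : S → PMF A) (ρ0 : PMF S)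
    (γ : ℝ) (hγ0 : 0 < γ) (hγ1 : γ < 1) (εmpre επpre εmpost επpost : ℝ)
    (hmpost : ∀ t : ℕ, t < k → ∑ sa : S × A,
      marginal ρ0 (fun t => if t < k then π1post else π1pre)
        (fun t => if t < k then p1post else p1pre) t sa *
          tv (p1post sa) (p2post sa) ≤ εmpost)
    (hπpost : ∀ s : S, tv (π1post s) (π2post s) ≤ επpost)
    (hmpre : ∀ t : ℕ, k ≤ t → ∑ sa : S × A,
      marginal ρ0 (fun t => if t < k then π1post else π1pre)
        (fun t => if t < k then p1post else p1pre) t sa *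
          tv (p1pre sa) (p2pre sa) ≤ εmpre)
    (hπpre : ∀ s : S, tv (π1pre s) (π2pre s) ≤ επpre) :
    tvFun
        (fun sa : S × A => (1 - γ) * ∑' t : ℕ, γ ^ t *
          marginal ρ0 (fun t => if t < k then π1post else π1pre)
            (fun t => if t < k then p1post else p1pre) t sa)
        (fun sa : S × A => (1 - γ) * ∑' t : ℕ, γ ^ t *
          marginal ρ0 (fun t => if t < k then π2post else π2pre)
            (fun t => if t < k then p2post else p2pre) t sa) ≤
      (k : ℝ) * (εmpost + 2 * επpost) +
        γ ^ (k + 1) / (1 - γ) * (εmpre + επpre) + γ ^ k * επpre := by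
  set π1s : ℕ → S → PMF A := fun t => if t < k then π1post else π1pre with hπ1s
  set π2s : ℕ → S → PMF A := fun t => if t < k then π2post else π2pre with hπ2s
  set p1s : ℕ → S × A → PMF S := fun t => if t < k then p1post else p1pre with hp1s
  set p2s : ℕ → S × A → PMF S := fun t => if t < k then p2post else p2pre with hp2s
  set M1 : ℕ → S × A → ℝ := marginal ρ0 π1s p1s with hM1
  set M2 : ℕ → S × A → ℝ := marginal ρ0 π2s p2s with hM2
  set Δ : ℕ → ℝ := fun t => tvFun (M1 t) (M2 t) with hΔdef
  have hγn : (0:ℝ) ≤ γ := hγ0.le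
  have h1γ : (0:ℝ) < 1 - γ := by linarith
  -- nonnegativity of the epsilons
  have hεπpost0 : 0 ≤ επpost := le_trans (tv_nonneg _ _) (hπpost (Classical.arbitrary S))
  have hεπpre0 : 0 ≤ επpre := le_trans (tv_nonneg _ _) (hπpre (Classical.arbitrary S))
  have hεmpre0 : 0 ≤ εmpre := by
    refine le_trans ?_ (hmpre k le_rfl)
    exact Finset.sum_nonneg fun sa _ =>
      mul_nonneg (marginal_nonneg _ _ _ _ _) (tv_nonneg _ _)
  have hεmpost0 : 0 < k → 0 ≤ εmpost := by
    intro hk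
    refine le_trans ?_ (hmpost 0 hk)
    exact Finset.sum_nonneg fun sa _ =>
      mul_nonneg (marginal_nonneg _ _ _ _ _) (tv_nonneg _ _)
  -- per-step policy and model bounds
  have hπstep : ∀ t : ℕ, ∀ s : S,
      tv (π1s t s) (π2s t s) ≤ if t < k then επpost else επpre := by
    intro t s
    by_cases h : t < k
    · simp only [hπ1s, hπ2s, if_pos h]
      exact hπpost s
    · simp only [hπ1s, hπ2s, if_neg h]
      exact hπpre s
  have hmstep : ∀ t : ℕ,
      (∑ sa : S × A, M1 t sa * tv (p1s t sa) (p2s t sa)) ≤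
        if t < k then εmpost else εmpre := by
    intro t
    by_cases h : t < k
    · simp only [hp1s, hp2s, if_pos h]
      exact hmpost t h
    · simp only [hp1s, hp2s, if_neg h]
      exact hmpre t (le_of_not_gt h)
  -- inductive bound on Δ
  have hB : ∀ t : ℕ, Δ t ≤ ((min (t+1) k : ℕ):ℝ) * επpost + ((min t k : ℕ):ℝ) * εmpost
      + (((t+1-k : ℕ)):ℝ) * επpre + (((t-k : ℕ)):ℝ) * εmpre := by
    intro t
    induction t with
    | zero =>
      have h0 : Δ 0 ≤ if 0 < k then επpost else επpre :=
        tv_marginal_zero ρ0 π1s π2s p1s p2s _ (fun s => hπstep 0 s)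
      by_cases hk : 0 < k
      · rw [if_pos hk] at h0
        have e1 : min (0+1) k = 1 := by omega
        have e3 : 0+1-k = 0 := by omega
        rw [e1, e3]
        simp only [Nat.cast_one, Nat.cast_zero, Nat.zero_sub, Nat.min_def]
        norm_num
        exact h0
      · rw [if_neg hk] at h0
        have e1 : min (0+1) k = 0 := by omega
        have e3 : 0+1-k = 1 := by omega
        rw [e1, e3]
        norm_num
        exact h0
    | succ t ih =>
      have hstep := tv_marginal_step ρ0 π1s π2s p1s p2s t
        (if t+1 < k then επpost else επpre) (fun s => hπstep (t+1) s)
      have hm := hmstep t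
      have hΔstep : Δ (t+1) ≤ Δ t + (if t < k then εmpost else εmpre)
          + (if t+1 < k then επpost else επpre) := by
        refine hstep.trans ?_
        have : (∑ sa : S × A, M1 t sa * tv (p1s t sa) (p2s t sa)) ≤
            if t < k then εmpost else εmpre := hm
        simp only [hΔdef, hM1, hM2]
        linarith
      rcases lt_or_ge (t+1) k with h1 | h1
      · -- t+1 < k
        have ht : t < k := by omega
        rw [if_pos ht, if_pos h1] at hΔstep
        have e1 : min (t+1+1) k = t+2 := by omega
        have e2 : min (t+1) k = t+1 := by omega
        have e3 : min t k = t := by omega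
        have e4 : t+1+1-k = 0 := by omega
        have e5 : t+1-k = 0 := by omega
        have e6 : t-k = 0 := by omega
        simp only [e1, e2, e3, e4, e5, e6] at ih ⊢
        push_cast at ih ⊢
        linarith
      · rcases lt_or_ge t k with h2 | h2
        · -- t < k = t+1
          have hk : k = t+1 := by omega
          rw [if_pos h2, if_neg (by omega : ¬ t+1 < k)] at hΔstep
          have e1 : min (t+1+1) k = t+1 := by omega
          have e2 : min (t+1) k = t+1 := by omega
          have e3 : min t k = t := by omega
          have e4 : t+1+1-k = 1 := by omega
          have e5 : t+1-k = 0 := by omega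
          have e6 : t-k = 0 := by omega
          simp only [e1, e2, e3, e4, e5, e6] at ih ⊢
          push_cast at ih ⊢
          linarith
        · -- k ≤ t
          rw [if_neg (by omega : ¬ t < k), if_neg (by omega : ¬ t+1 < k)] at hΔstep
          have e1 : min (t+1+1) k = k := by omega
          have e2 : min (t+1) k = k := by omega
          have e3 : min t k = k := by omega
          have e4 : t+1+1-k = (t+1-k)+1 := by omega
          have e5 : t+1-k = (t-k)+1 := by omega
          simp only [e1, e2, e3, e4, e5] at ih ⊢
          push_cast at ih ⊢
          linarith
  -- coarser closed-form bound
  have hC : ∀ t : ℕ, Δ t ≤ (k:ℝ) * επpost + (k:ℝ) * εmpost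
      + (((t+1-k : ℕ)):ℝ) * επpre + (((t-k : ℕ)):ℝ) * εmpre := by
    intro t
    refine (hB t).trans ?_
    have g1 : ((min (t+1) k : ℕ):ℝ) * επpost ≤ (k:ℝ) * επpost := by
      apply mul_le_mul_of_nonneg_right _ hεπpost0
      exact_mod_cast min_le_right (t+1) k
    have g2 : ((min t k : ℕ):ℝ) * εmpost ≤ (k:ℝ) * εmpost := by
      rcases Nat.eq_zero_or_pos k with hk | hk
      · subst hk; simp
      · apply mul_le_mul_of_nonneg_right _ (hεmpost0 hk)
        exact_mod_cast min_le_right t k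
    linarith
  -- summability facts
  have hs0 : Summable (fun t : ℕ => γ ^ t) := summable_geometric_of_lt_one hγn hγ1
  have hsn : Summable (fun t : ℕ => (t:ℝ) * γ ^ t) :=
    (hasSum_coe_mul_geometric_of_norm_lt_one
      (by rwa [Real.norm_eq_abs, abs_of_nonneg hγn])).summable
  set u1 : ℕ → ℝ := fun t => ((t+1-k : ℕ):ℝ) * γ ^ t with hu1def
  set u2 : ℕ → ℝ := fun t => ((t-k : ℕ):ℝ) * γ ^ t with hu2def
  have hu1 : Summable u1 := by
    refine Summable.of_nonneg_of_le (fun t => by positivity) (fun t => ?_) (hsn.add hs0)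
    have h' : (t+1-k : ℕ) ≤ t+1 := by omega
    have : ((t+1-k : ℕ):ℝ) ≤ (t:ℝ) + 1 := by exact_mod_cast h'
    have hp : (0:ℝ) ≤ γ ^ t := pow_nonneg hγn t
    simp only [hu1def]
    nlinarith
  have hu2 : Summable u2 := by
    refine Summable.of_nonneg_of_le (fun t => by positivity) (fun t => ?_) hsn
    have h' : (t-k : ℕ) ≤ t := by omega
    have : ((t-k : ℕ):ℝ) ≤ (t:ℝ) := by exact_mod_cast h'
    have hp : (0:ℝ) ≤ γ ^ t := pow_nonneg hγn t
    simp only [hu2def]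
    nlinarith
  -- values of the shifted series
  have hgsum : ∑' t : ℕ, (t:ℝ) * γ ^ t = γ / (1-γ)^2 :=
    tsum_coe_mul_geometric_of_norm_lt_one (by rwa [Real.norm_eq_abs, abs_of_nonneg hγn])
  have hgeo : ∑' t : ℕ, γ ^ t = (1-γ)⁻¹ := tsum_geometric_of_lt_one hγn hγ1
  have hT1 : ∑' t, u1 t = γ ^ k / (1-γ)^2 := by
    have he : (fun i : ℕ => u1 (i + k)) = fun i : ℕ => γ ^ k * ((i:ℝ) * γ ^ i + γ ^ i) := by
      funext i
      have e : i + k + 1 - k = i + 1 := by omega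
      simp only [hu1def, e, pow_add]
      push_cast
      ring
    have hsh : Summable (fun i : ℕ => u1 (i + k)) := by
      rw [he]; exact ((hsn.add hs0).mul_left _)
    have := Summable.sum_add_tsum_nat_add' (f := u1) (k := k) hsh
    have hz : ∑ i ∈ Finset.range k, u1 i = 0 := by
      refine Finset.sum_eq_zero fun i hi => ?_
      have : i + 1 - k = 0 := by
        have := Finset.mem_range.mp hi; omega
      simp [hu1def, this]
    rw [hz, zero_add] at this
    rw [← this, he, tsum_mul_left, Summable.tsum_add hsn hs0, hgsum, hgeo]
    field_simp
    ring
  have hT2 : ∑' t, u2 t = γ ^ (k+1) / (1-γ)^2 := by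
    have he : (fun i : ℕ => u2 (i + k)) = fun i : ℕ => γ ^ k * ((i:ℝ) * γ ^ i) := by
      funext i
      have e : i + k - k = i := by omega
      simp only [hu2def, e, pow_add]
      ring
    have hsh : Summable (fun i : ℕ => u2 (i + k)) := by
      rw [he]; exact (hsn.mul_left _)
    have := Summable.sum_add_tsum_nat_add' (f := u2) (k := k) hsh
    have hz : ∑ i ∈ Finset.range k, u2 i = 0 := by
      refine Finset.sum_eq_zero fun i hi => ?_
      have : i - k = 0 := by
        have := Finset.mem_range.mp hi; omega
      simp [hu2def, this]
    rw [hz, zero_add] at this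
    rw [← this, he, tsum_mul_left, hgsum]
    rw [pow_succ]
    ring
  set a : ℝ := (k:ℝ) * επpost + (k:ℝ) * εmpost with hadef
  have hF : Summable (fun t : ℕ => a * γ ^ t + επpre * u1 t + εmpre * u2 t) :=
    ((hs0.mul_left a).add (hu1.mul_left επpre)).add (hu2.mul_left εmpre)
  have hΔle : ∀ t : ℕ, γ ^ t * Δ t ≤ a * γ ^ t + επpre * u1 t + εmpre * u2 t := by
    intro t
    have h := hC t
    have hp : (0:ℝ) ≤ γ ^ t := pow_nonneg hγn t
    have := mul_le_mul_of_nonneg_left h hp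
    simp only [hu1def, hu2def, hadef]
    nlinarith [this]
  have hsumΔ : Summable (fun t : ℕ => γ ^ t * Δ t) :=
    Summable.of_nonneg_of_le
      (fun t => mul_nonneg (pow_nonneg hγn t) (tvFun_nonneg _ _)) hΔle hF
  have hΔsum_le : ∑' t : ℕ, γ ^ t * Δ t ≤
      a * (1-γ)⁻¹ + επpre * (γ ^ k / (1-γ)^2) + εmpre * (γ ^ (k+1) / (1-γ)^2) := by
    refine (Summable.tsum_le_tsum hΔle hsumΔ hF).trans_eq ?_
    rw [Summable.tsum_add ((hs0.mul_left a).add (hu1.mul_left επpre)) (hu2.mul_left εmpre),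
      Summable.tsum_add (hs0.mul_left a) (hu1.mul_left επpre),
      tsum_mul_left, tsum_mul_left, tsum_mul_left, hgeo, hT1, hT2]
  -- summability of the marginal series
  have hsum1 : ∀ sa : S × A, Summable (fun t : ℕ => γ ^ t * M1 t sa) := by
    intro sa
    refine Summable.of_nonneg_of_le
      (fun t => mul_nonneg (pow_nonneg hγn t) (marginal_nonneg _ _ _ _ _))
      (fun t => ?_) hs0
    calc γ ^ t * M1 t sa ≤ γ ^ t * 1 :=
          mul_le_mul_of_nonneg_left (marginal_le_one _ _ _ _ _) (pow_nonneg hγn t)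
      _ = γ ^ t := mul_one _
  have hsum2 : ∀ sa : S × A, Summable (fun t : ℕ => γ ^ t * M2 t sa) := by
    intro sa
    refine Summable.of_nonneg_of_le
      (fun t => mul_nonneg (pow_nonneg hγn t) (marginal_nonneg _ _ _ _ _))
      (fun t => ?_) hs0
    calc γ ^ t * M2 t sa ≤ γ ^ t * 1 :=
          mul_le_mul_of_nonneg_left (marginal_le_one _ _ _ _ _) (pow_nonneg hγn t)
      _ = γ ^ t := mul_one _
  have hsumabs : ∀ sa : S × A, Summable (fun t : ℕ => γ ^ t * |M1 t sa - M2 t sa|) := by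
    intro sa
    refine Summable.of_nonneg_of_le (fun t => by positivity) (fun t => ?_) (hs0.mul_left 2)
    have h1 : |M1 t sa - M2 t sa| ≤ 2 := by
      have a1 : M1 t sa ≤ 1 := marginal_le_one _ _ _ _ _
      have a2 : M2 t sa ≤ 1 := marginal_le_one _ _ _ _ _
      have a3 : 0 ≤ M1 t sa := marginal_nonneg _ _ _ _ _
      have a4 : 0 ≤ M2 t sa := marginal_nonneg _ _ _ _ _
      rw [abs_le]; constructor <;> linarith
    have hp : (0:ℝ) ≤ γ ^ t := pow_nonneg hγn t
    nlinarith
  -- pointwise bound for the occupancy difference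
  have habs : ∀ sa : S × A,
      |(1 - γ) * (∑' t : ℕ, γ ^ t * M1 t sa) - (1 - γ) * (∑' t : ℕ, γ ^ t * M2 t sa)| ≤
        (1 - γ) * ∑' t : ℕ, γ ^ t * |M1 t sa - M2 t sa| := by
    intro sa
    rw [← mul_sub, abs_mul, abs_of_nonneg h1γ.le,
      ← Summable.tsum_sub (hsum1 sa) (hsum2 sa)]
    apply mul_le_mul_of_nonneg_left _ h1γ.le
    have heq : (fun t : ℕ => ‖γ ^ t * M1 t sa - γ ^ t * M2 t sa‖) =
        fun t : ℕ => γ ^ t * |M1 t sa - M2 t sa| := by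
      funext t
      rw [Real.norm_eq_abs, ← mul_sub, abs_mul, abs_of_nonneg (pow_nonneg hγn t)]
    have hn : Summable (fun t : ℕ => ‖γ ^ t * M1 t sa - γ ^ t * M2 t sa‖) := by
      rw [heq]; exact hsumabs sa
    have := norm_tsum_le_tsum_norm hn
    rw [Real.norm_eq_abs] at this
    rw [heq] at this
    exact this
  -- main chain
  have hswap : ∑ sa : S × A, ∑' t : ℕ, γ ^ t * |M1 t sa - M2 t sa| =
      ∑' t : ℕ, ∑ sa : S × A, γ ^ t * |M1 t sa - M2 t sa| :=
    (Summable.tsum_finsetSum (fun sa _ => hsumabs sa)).symm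
  have hΔeq : ∀ t : ℕ, (1/2) * ∑ sa : S × A, γ ^ t * |M1 t sa - M2 t sa| = γ ^ t * Δ t := by
    intro t
    rw [← Finset.mul_sum]
    simp only [hΔdef]
    unfold tvFun
    ring
  calc tvFun
        (fun sa : S × A => (1 - γ) * ∑' t : ℕ, γ ^ t * M1 t sa)
        (fun sa : S × A => (1 - γ) * ∑' t : ℕ, γ ^ t * M2 t sa)
      = (1/2) * ∑ sa : S × A,
          |(1 - γ) * (∑' t : ℕ, γ ^ t * M1 t sa) - (1 - γ) * (∑' t : ℕ, γ ^ t * M2 t sa)| := by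
        unfold tvFun; rfl
    _ ≤ (1/2) * ∑ sa : S × A, (1 - γ) * ∑' t : ℕ, γ ^ t * |M1 t sa - M2 t sa| := by
        have := Finset.sum_le_sum (fun sa (_ : sa ∈ Finset.univ) => habs sa)
        linarith
    _ = (1 - γ) * ∑' t : ℕ, γ ^ t * Δ t := by
        rw [← Finset.mul_sum, hswap]
        rw [show ∑' t : ℕ, ∑ sa : S × A, γ ^ t * |M1 t sa - M2 t sa| =
            ∑' t : ℕ, (2:ℝ) * (γ ^ t * Δ t) from ?_]
        · rw [tsum_mul_left]; ring
        · refine tsum_congr fun t => ?_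
          have := hΔeq t
          linarith
    _ ≤ (1 - γ) * (a * (1-γ)⁻¹ + επpre * (γ ^ k / (1-γ)^2) + εmpre * (γ ^ (k+1) / (1-γ)^2)) :=
        mul_le_mul_of_nonneg_left hΔsum_le h1γ.le
    _ ≤ (k : ℝ) * (εmpost + 2 * επpost) + γ ^ (k + 1) / (1 - γ) * (εmpre + επpre)
          + γ ^ k * επpre := by
        have hkey : (1 - γ) * (a * (1-γ)⁻¹ + επpre * (γ ^ k / (1-γ)^2)
            + εmpre * (γ ^ (k+1) / (1-γ)^2)) =
            a + επpre * (γ ^ k / (1-γ)) + εmpre * (γ ^ (k+1) / (1-γ)) := by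
          field_simp
        have hsplit : γ ^ k / (1-γ) = γ ^ k + γ ^ (k+1) / (1-γ) := by
          field_simp
          ring
        have hkπ : 0 ≤ (k:ℝ) * επpost := mul_nonneg (Nat.cast_nonneg k) hεπpost0
        rw [hkey, hsplit, hadef]
        ring_nf
        nlinarith [hkπ]
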